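/- Let R = 0.77. For every α with 0.645 ≤ α < 0.77, let x ∈ (0,1) be the unique solution of (x - 1)/ln x = α and let y ∈ (0,1) be the unique solution of (y - 1)/ln y = α/R. Then 1/(2(1 - y)) > 1/(1 - x), i.e., the naive-WOM system has a strictly worse (larger) erasure factor than the baseline system. -/

import Mathlib

/-- Numeric bound: `log 0.3856 < -(81/85)`. -/
lemma log_c_lt : Real.log 0.3856 < -(81/85 : ℝ) := by
  have hc : (0:ℝ) < 0.3856 := by norm_num
  rw [Real.log_lt_iff_lt_exp hc, Real.exp_neg]
  -- suffices exp (81/85) < 1/0.3856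
  have hpow : Real.exp (81/85) ^ (85:ℕ) < (1/0.3856 : ℝ) ^ (85:ℕ) := by
    have h1 : Real.exp (81/85) ^ (85:ℕ) = Real.exp 81 := by
      rw [← Real.exp_nat_mul]; norm_num
    have h2 : Real.exp 81 = Real.exp 1 ^ (81:ℕ) := by
      rw [← Real.exp_nat_mul]; norm_num
    rw [h1, h2]
    calc Real.exp 1 ^ (81:ℕ) < (2.7182818286:ℝ) ^ (81:ℕ) := by
          exact pow_lt_pow_left₀ Real.exp_one_lt_d9 (Real.exp_pos 1).le (by norm_num)
      _ < (1/0.3856 : ℝ) ^ (85:ℕ) := by norm_num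
  have hexp : Real.exp (81/85) < 1/0.3856 :=
    lt_of_pow_lt_pow_left₀ 85 (by norm_num) hpow
  have hpos : (0:ℝ) < Real.exp (81/85) := Real.exp_pos _
  rw [lt_inv_comm₀ hc hpos]
  calc Real.exp (81/85) < 1/0.3856 := hexp
    _ = (0.3856:ℝ)⁻¹ := by norm_num

/-- Numeric bound: `(1+0.3856)/2 < 0.3856 ^ (0.385 : ℝ)` (rpow). -/
lemma chord_lt : ((1 + 0.3856)/2 : ℝ) < (0.3856 : ℝ) ^ (0.385 : ℝ) := by
  have hc : (0:ℝ) < 0.3856 := by norm_num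
  have hpow : ((1 + 0.3856)/2 : ℝ) ^ (200:ℕ) < ((0.3856 : ℝ) ^ (0.385 : ℝ)) ^ (200:ℕ) := by
    have h1 : ((0.3856 : ℝ) ^ (0.385 : ℝ)) ^ (200:ℕ) = (0.3856:ℝ) ^ (77:ℕ) := by
      rw [← Real.rpow_natCast ((0.3856 : ℝ) ^ (0.385 : ℝ)) 200,
        ← Real.rpow_mul hc.le, ← Real.rpow_natCast (0.3856:ℝ) 77]
      norm_num
    rw [h1]
    norm_num
  exact lt_of_pow_lt_pow_left₀ 200 (by positivity) hpow

/-- Let `R = 0.77`. For every `0.645 ≤ α < 0.77`, with `x ∈ (0,1)` the unique solution of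
`(x - 1)/ln x = α` and `y ∈ (0,1)` the unique solution of `(y - 1)/ln y = α/R`, the
naive-WOM erasure factor is strictly worse: `1/(2(1 - y)) > 1/(1 - x)`. -/
theorem naiveWOM_worse_than_baseline :
    ∀ α x y : ℝ, 0.645 ≤ α → α < 0.77 →
      x ∈ Set.Ioo (0:ℝ) 1 → y ∈ Set.Ioo (0:ℝ) 1 →
      (x - 1) / Real.log x = α → (y - 1) / Real.log y = α / 0.77 →
      1 / (2 * (1 - y)) > 1 / (1 - x) := by
  intro α x y hα hα' hx hy hfx hfy
  obtain ⟨hx0, hx1⟩ := hx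
  obtain ⟨hy0, hy1⟩ := hy
  have hlx : Real.log x < 0 := Real.log_neg hx0 hx1
  have hly : Real.log y < 0 := Real.log_neg hy0 hy1
  have hex : x - 1 = α * Real.log x := by
    rw [div_eq_iff (ne_of_lt hlx)] at hfx; linarith [hfx]
  have hey : y - 1 = (α / 0.77) * Real.log y := by
    rw [div_eq_iff (ne_of_lt hly)] at hfy; linarith [hfy]
  have hαpos : (0:ℝ) < α := by linarith
  have hβpos : (0:ℝ) < α / 0.77 := by positivity
  -- Step 1 : x > 0.3856
  have hcx : (0.3856 : ℝ) < x := by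
    by_contra hcon
    push_neg at hcon
    have h1 : x - 1 ≤ 0.645 * Real.log x := by nlinarith [hex]
    have h2 : Real.log x - Real.log 0.3856 ≤ x / 0.3856 - 1 := by
      have := Real.log_le_sub_one_of_pos (show (0:ℝ) < x / 0.3856 by positivity)
      rwa [Real.log_div (ne_of_gt hx0) (by norm_num)] at this
    have h2' : Real.log x ≤ Real.log 0.3856 + (x * (10000/3856) - 1) := by
      have : x / 0.3856 = x * (10000/3856) := by ring
      rw [this] at h2; linarith
    have h3 := log_c_lt
    linarith
  -- Step 2 : key inequality log ((1+x)/2) < 0.385 * log x via concavity of rpow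
  have hkey : Real.log ((1 + x)/2) < 0.385 * Real.log x := by
    have hconc := Real.concaveOn_rpow (p := (0.385:ℝ)) (by norm_num) (by norm_num)
    set lam : ℝ := (1 - x) / (1 - 0.3856) with hlam
    have hlam0 : 0 < lam := by
      apply div_pos <;> linarith
    have hlam1 : lam < 1 := by
      rw [hlam, div_lt_one (by norm_num)]; linarith
    have hlc : lam * (1 - 0.3856) = 1 - x := by
      rw [hlam]; exact div_mul_cancel₀ _ (by norm_num)
    have hcomb : lam • (0.3856:ℝ) + (1 - lam) • (1:ℝ) = x := by
      simp only [smul_eq_mul, mul_one]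
      linear_combination (-1 : ℝ) * hlc
    have h4 := hconc.2
      (Set.mem_Ici.2 (by norm_num : (0:ℝ) ≤ 0.3856))
      (Set.mem_Ici.2 (by norm_num : (0:ℝ) ≤ 1)) hlam0.le
      (by linarith : (0:ℝ) ≤ 1 - lam) (by ring : lam + (1 - lam) = 1)
    rw [hcomb] at h4
    have h4' : lam * (0.3856:ℝ) ^ (0.385:ℝ) + (1 - lam) * 1 ≤ x ^ (0.385:ℝ) := by
      simpa [Real.one_rpow] using h4
    have h6 := chord_lt
    have h7 : ((1 + x)/2 : ℝ) < x ^ (0.385:ℝ) := by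
      nlinarith [h4', h6, hlam0, hlc]
    have h8 : Real.log ((1 + x)/2) < Real.log (x ^ (0.385:ℝ)) :=
      Real.log_lt_log (by linarith) h7
    rwa [Real.log_rpow hx0] at h8
  -- Step 3 : ψ((1+x)/2) > 0 where ψ(s) = s - 1 - (α/0.77) log s
  set t : ℝ := (1 + x)/2 with hT
  have ht0 : 0 < t := by rw [hT]; linarith
  have ht1 : t < 1 := by rw [hT]; linarith
  have hψ : t - 1 - (α / 0.77) * Real.log t > 0 := by
    have h5 : (α / 0.77) * Real.log t < (α / 0.77) * (0.385 * Real.log x) :=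
      mul_lt_mul_of_pos_left hkey hβpos
    have h6 : (α / 0.77) * (0.385 * Real.log x) = 0.5 * (α * Real.log x) := by ring
    rw [h6] at h5
    have ht : t - 1 = 0.5 * (x - 1) := by rw [hT]; ring
    linarith [hex, h5, ht]
  -- Step 4 : t < y via strict concavity of log
  have hty : t < y := by
    by_contra hcon
    push_neg at hcon  -- y ≤ t
    rcases eq_or_lt_of_le hcon with heq | hlt
    · rw [← heq] at hψ; linarith [hey, hψ]
    · -- y < t < 1
      set lam : ℝ := (1 - t) / (1 - y) with hlam
      have h1y : (0:ℝ) < 1 - y := by linarith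
      have hlam0 : 0 < lam := by apply div_pos <;> linarith
      have hlam1 : lam < 1 := by rw [hlam, div_lt_one h1y]; linarith
      have hlc : lam * (1 - y) = 1 - t := by
        rw [hlam]; exact div_mul_cancel₀ _ (ne_of_gt h1y)
      have hcomb : lam • y + (1 - lam) • (1:ℝ) = t := by
        simp only [smul_eq_mul, mul_one]
        linear_combination (-1 : ℝ) * hlc
      have hcc := strictConcaveOn_log_Ioi.2
        (Set.mem_Ioi.2 hy0)
        (Set.mem_Ioi.2 (by norm_num : (0:ℝ) < 1)) (by linarith : y ≠ 1)
        hlam0 (by linarith : (0:ℝ) < 1 - lam) (by ring : lam + (1 - lam) = 1)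
      rw [hcomb, Real.log_one] at hcc
      have hcc' : lam * Real.log y < Real.log t := by
        simpa using hcc
      have e2 : lam * ((α / 0.77) * Real.log y) < (α / 0.77) * Real.log t := by
        calc lam * ((α / 0.77) * Real.log y) = (α / 0.77) * (lam * Real.log y) := by ring
          _ < (α / 0.77) * Real.log t := mul_lt_mul_of_pos_left hcc' hβpos
      have e1 : lam * (y - 1) - lam * ((α / 0.77) * Real.log y) = 0 := by
        have h0 : y - 1 - (α / 0.77) * Real.log y = 0 := by linarith [hey]
        calc lam * (y - 1) - lam * ((α / 0.77) * Real.log y)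
            = lam * (y - 1 - (α / 0.77) * Real.log y) := by ring
          _ = 0 := by rw [h0]; ring
      have e3 : t - 1 = lam * (y - 1) := by
        have h9 : lam * (y - 1) = -(lam * (1 - y)) := by ring
        rw [h9, hlc]; ring
      linarith [hψ, e1, e2, e3]
  -- Step 5 : conclude
  have h2y : 2 * (1 - y) < 1 - x := by rw [hT] at hty; linarith
  have hpos : (0:ℝ) < 2 * (1 - y) := by linarith
  exact one_div_lt_one_div_of_lt hpos h2y
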